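/- arXiv:math/0501452 — 5 statements merged into one kernel-verified Lean document; each statement's English description precedes it below -/
import Mathlib

section
/- Let A, B be real symmetric n×n matrices that are linearly independent, with rank(A) ≥ 3 and rank(B) ≥ 3, neither A nor B semidefinite. Then the intersection {x : xᵀAx = 0} ∩ {x : xᵀBx = 0} cannot contain a nonempty open subset of {x : xᵀAx = 0} (i.e., the two quadrics cannot coincide on an open piece of dimension n−1 without being equal). -/
open Matrix Polynomial

private lemma dot_symm {n : ℕ} (M : Matrix (Fin n) (Fin n) ℝ) (hM : M.IsSymm) (x y : Fin n → ℝ) :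
    x ⬝ᵥ M *ᵥ y = y ⬝ᵥ M *ᵥ x := by
  rw [Matrix.dotProduct_mulVec, ← Matrix.mulVec_transpose, hM.eq, dotProduct_comm]

private lemma expand2 {n : ℕ} (M : Matrix (Fin n) (Fin n) ℝ) (hM : M.IsSymm)
    (x y : Fin n → ℝ) (s : ℝ) :
    (x + s•y) ⬝ᵥ M *ᵥ (x + s•y) =
      x ⬝ᵥ M *ᵥ x + s^2*(y ⬝ᵥ M *ᵥ y) + 2*s*(x ⬝ᵥ M *ᵥ y) := by
  simp only [mulVec_add, mulVec_smul, dotProduct_add, add_dotProduct, smul_dotProduct,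
    dotProduct_smul, smul_eq_mul]
  rw [dot_symm M hM y x]
  ring

private lemma expand3 {n : ℕ} (M : Matrix (Fin n) (Fin n) ℝ) (hM : M.IsSymm)
    (x y z : Fin n → ℝ) (s t : ℝ) :
    (x + s•y + t•z) ⬝ᵥ M *ᵥ (x + s•y + t•z) =
      x ⬝ᵥ M *ᵥ x + s^2*(y ⬝ᵥ M *ᵥ y) + t^2*(z ⬝ᵥ M *ᵥ z)
      + 2*s*(x ⬝ᵥ M *ᵥ y) + 2*t*(x ⬝ᵥ M *ᵥ z) + 2*s*t*(y ⬝ᵥ M *ᵥ z) := by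
  simp only [mulVec_add, mulVec_smul, dotProduct_add, add_dotProduct, smul_dotProduct,
    dotProduct_smul, smul_eq_mul]
  rw [dot_symm M hM y x, dot_symm M hM z x, dot_symm M hM z y]
  ring

private lemma dlin {n : ℕ} (M : Matrix (Fin n) (Fin n) ℝ) (x y z : Fin n → ℝ) (s : ℝ) :
    z ⬝ᵥ M *ᵥ (x + s•y) = z ⬝ᵥ M *ᵥ x + s*(z ⬝ᵥ M *ᵥ y) := by
  simp only [mulVec_add, mulVec_smul, dotProduct_add, dotProduct_smul, smul_eq_mul]

private lemma poly4_zero (c0 c1 c2 c3 c4 : ℝ) (S : Set ℝ) (hS : S.Infinite)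
    (h : ∀ t ∈ S, c0 + c1*t + c2*t^2 + c3*t^3 + c4*t^4 = 0) :
    c0 = 0 ∧ c1 = 0 ∧ c2 = 0 ∧ c3 = 0 ∧ c4 = 0 := by
  have hP : (C c0 + C c1 * X + C c2 * X^2 + C c3 * X^3 + C c4 * X^4 : ℝ[X]) = 0 := by
    apply Polynomial.eq_zero_of_infinite_isRoot
    apply hS.mono
    intro t ht
    simp only [Set.mem_setOf_eq, Polynomial.IsRoot, Polynomial.eval_add, Polynomial.eval_mul,
      Polynomial.eval_pow, Polynomial.eval_C, Polynomial.eval_X]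
    linarith [h t ht]
  have h0 := congrArg (fun p : ℝ[X] => p.coeff 0) hP
  have h1 := congrArg (fun p : ℝ[X] => p.coeff 1) hP
  have h2 := congrArg (fun p : ℝ[X] => p.coeff 2) hP
  have h3 := congrArg (fun p : ℝ[X] => p.coeff 3) hP
  have h4 := congrArg (fun p : ℝ[X] => p.coeff 4) hP
  simp [coeff_add, coeff_C_mul, coeff_X_pow, coeff_C] at h0 h1 h2 h3 h4
  exact ⟨h0, h1, h2, h3, h4⟩

set_option maxHeartbeats 1000000 in
private lemma curve_identities {n : ℕ} (A B : Matrix (Fin n) (Fin n) ℝ)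
    (hA : A.IsSymm) (hB : B.IsSymm)
    (V : Set (Fin n → ℝ)) (hV : IsOpen V)
    (hVsub : ∀ x ∈ V, x ⬝ᵥ A *ᵥ x = 0 → x ⬝ᵥ B *ᵥ x = 0)
    (p q v : Fin n → ℝ) (hp : p ∈ V) (hpA : p ⬝ᵥ A *ᵥ p = 0) (hpB : p ⬝ᵥ B *ᵥ p = 0)
    (hpq : p ⬝ᵥ A *ᵥ q = 1) (hc : q ⬝ᵥ A *ᵥ q ≠ 0) (hv : p ⬝ᵥ A *ᵥ v = 0) :
    let a := v ⬝ᵥ A *ᵥ v; let g := v ⬝ᵥ A *ᵥ q; let c := q ⬝ᵥ A *ᵥ q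
    let α := p ⬝ᵥ B *ᵥ v; let μ := p ⬝ᵥ B *ᵥ q; let b := v ⬝ᵥ B *ᵥ v
    let d := v ⬝ᵥ B *ᵥ q; let e := q ⬝ᵥ B *ᵥ q
    let P := c*α; let R := c*b - e*a; let K := c*μ - e; let L := c*d - e*g
    P*K = 0 ∧ c*P^2 - 2*P*L - R*K - 2*P*K*g + a*K^2 = 0 ∧
      c*P*R - R*L - 2*P*L*g - R*K*g + 2*a*K*L = 0 ∧ c*R^2 - 4*g*R*L + 4*a*L^2 = 0 := by
  intro a g c α μ b d e P R K L
  set β : ℝ → ℝ := fun t => (-(1+t*g) + Real.sqrt ((1+t*g)^2 - c*a*t^2))/c with hβ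
  set x : ℝ → (Fin n → ℝ) := fun t => p + t•v + (β t)•q with hx
  have hβcont : Continuous β := by
    apply Continuous.div_const
    exact (continuous_const.add (continuous_id.mul continuous_const)).neg.add
      ((Real.continuous_sqrt).comp
        ((((continuous_const.add (continuous_id.mul continuous_const)).pow 2).sub
          (continuous_const.mul (continuous_id.pow 2)))))
  have hxcont : Continuous x := by
    apply (continuous_const.add ?_).add (hβcont.smul continuous_const)
    exact continuous_id.smul continuous_const
  have hβ0 : β 0 = 0 := by simp [hβ, Real.sqrt_one]
  have hx0 : x 0 = p := by simp [hx, hβ0]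
  have hDcont : Continuous (fun t : ℝ => (1+t*g)^2 - c*a*t^2) :=
    (((continuous_const.add (continuous_id.mul continuous_const)).pow 2).sub
      (continuous_const.mul (continuous_id.pow 2)))
  set U : Set ℝ := (x ⁻¹' V) ∩ {t : ℝ | 0 < (1+t*g)^2 - c*a*t^2} with hU
  have hUopen : IsOpen U := (hV.preimage hxcont).inter (isOpen_lt continuous_const hDcont)
  have hU0 : (0:ℝ) ∈ U := by
    constructor
    · show x 0 ∈ V
      rw [hx0]; exact hp
    · show (0:ℝ) < (1+0*g)^2 - c*a*0^2
      norm_num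
  obtain ⟨ε, hε, hball⟩ := Metric.mem_nhds_iff.mp (hUopen.mem_nhds hU0)
  have hIoo : Set.Ioo (-ε) ε ⊆ U := by
    intro t ht
    apply hball
    simp only [Metric.mem_ball, Real.dist_eq, sub_zero]
    rw [abs_lt]; exact ⟨ht.1, ht.2⟩
  have hkey : ∀ t ∈ Set.Ioo (-ε) ε,
      0 + (-8*P*K)*t + (4*c*P^2 - 8*P*L - 4*R*K - 8*P*K*g + 4*a*K^2)*t^2
      + (4*c*P*R - 4*R*L - 8*P*L*g - 4*R*K*g + 8*a*K*L)*t^3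
      + (c*R^2 - 4*R*L*g + 4*a*L^2)*t^4 = 0 := by
    intro t ht
    obtain ⟨htV, htD⟩ := hIoo ht
    have hS2 : (Real.sqrt ((1+t*g)^2 - c*a*t^2))^2 = (1+t*g)^2 - c*a*t^2 :=
      Real.sq_sqrt (le_of_lt htD)
    have hEA : a*t^2 + 2*(β t)*(1+t*g) + c*(β t)^2 = 0 := by
      have hcβ : c * β t = -(1+t*g) + Real.sqrt ((1+t*g)^2 - c*a*t^2) := by
        rw [hβ]; have hc' : c ≠ 0 := hc; field_simp
      apply mul_left_cancel₀ hc
      have hrw : c * (a*t^2 + 2*(β t)*(1+t*g) + c*(β t)^2)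
          = c*a*t^2 + 2*(c * β t)*(1+t*g) + (c * β t)^2 := by ring
      rw [hrw, hcβ, mul_zero]
      nlinarith [hS2]
    have hQA : (x t) ⬝ᵥ A *ᵥ (x t) = 0 := by
      rw [hx]
      simp only
      rw [expand3 A hA p v q t (β t), hpA, hpq, hv]
      show 0 + t^2*a + (β t)^2*c + 2*t*0 + 2*(β t)*1 + 2*t*(β t)*g = 0
      linarith [hEA]
    have hQB := hVsub (x t) htV hQA
    have hEB : 2*α*t + b*t^2 + 2*(β t)*(μ + d*t) + e*(β t)^2 = 0 := by
      rw [hx] at hQB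
      simp only at hQB
      rw [expand3 B hB p v q t (β t), hpB] at hQB
      show 2*α*t + b*t^2 + 2*(β t)*(μ + d*t) + e*(β t)^2 = 0
      linarith [hQB]
    set bt := β t
    set m := 1 + t*g with hm
    set 𝒜 := 2*P*t + R*t^2 with h𝒜
    set ℬ := 2*K + 2*L*t with hℬ
    set X := c*𝒜 - c*bt*ℬ - 2*m*ℬ with hX
    linear_combination (X*c) * hEB + (ℬ^2 - X*e) * hEA
  have hinf : (Set.Ioo (-ε) ε).Infinite := Set.Ioo_infinite (by linarith)
  obtain ⟨-, h1, h2, h3, h4⟩ := poly4_zero _ _ _ _ _ _ hinf hkey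
  refine ⟨by linarith, by linarith, by linarith, by linarith⟩

private lemma lemK {n : ℕ} (A B : Matrix (Fin n) (Fin n) ℝ) (hA : A.IsSymm) (hB : B.IsSymm)
    (V : Set (Fin n → ℝ)) (hV : IsOpen V)
    (hVsub : ∀ x ∈ V, x ⬝ᵥ A *ᵥ x = 0 → x ⬝ᵥ B *ᵥ x = 0)
    (p v0 : Fin n → ℝ) (hp : p ∈ V) (hpA : p ⬝ᵥ A *ᵥ p = 0) (hpB : p ⬝ᵥ B *ᵥ p = 0)
    (hv0 : p ⬝ᵥ A *ᵥ v0 = 0) (ha0 : v0 ⬝ᵥ A *ᵥ v0 ≠ 0)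
    (q : Fin n → ℝ) (hpq : p ⬝ᵥ A *ᵥ q = 1) (hc : q ⬝ᵥ A *ᵥ q ≠ 0) :
    q ⬝ᵥ B *ᵥ q = (q ⬝ᵥ A *ᵥ q) * (p ⬝ᵥ B *ᵥ q) := by
  obtain ⟨h1, h2, h3, h4⟩ :=
    curve_identities A B hA hB V hV hVsub p q v0 hp hpA hpB hpq hc hv0
  set a := v0 ⬝ᵥ A *ᵥ v0 with ha
  set g := v0 ⬝ᵥ A *ᵥ q with hg
  set c := q ⬝ᵥ A *ᵥ q with hcc
  set α := p ⬝ᵥ B *ᵥ v0 with hα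
  set μ := p ⬝ᵥ B *ᵥ q with hμ
  set b := v0 ⬝ᵥ B *ᵥ v0 with hb
  set d := v0 ⬝ᵥ B *ᵥ q with hd
  set e := q ⬝ᵥ B *ᵥ q with he
  show e = c * μ
  by_contra hne
  have hK : c*μ - e ≠ 0 := fun h => hne (by linarith)
  have hP0 : c*α = 0 := by
    rcases mul_eq_zero.mp h1 with h | h
    · exact h
    · exact absurd h hK
  have h2' : (c*μ - e)*(a*(c*μ - e) - (c*b - e*a)) = 0 := by
    linear_combination h2 + (2*(c*d - e*g) + 2*(c*μ - e)*g - c*(c*α))*hP0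
  have hR : a*(c*μ - e) - (c*b - e*a) = 0 := (mul_eq_zero.mp h2').resolve_left hK
  have h3' : (a*(c*μ - e))*((c*d - e*g) - (c*μ - e)*g) = 0 := by
    linear_combination h3 + (2*(c*d - e*g)*g - c*(c*b - e*a))*hP0
      - ((c*d - e*g) + (c*μ - e)*g)*hR
  have haK : a*(c*μ - e) ≠ 0 := mul_ne_zero ha0 hK
  have hL : (c*d - e*g) - (c*μ - e)*g = 0 := (mul_eq_zero.mp h3').resolve_left haK
  have hR' : (c*b - e*a) = a*(c*μ - e) := by linarith
  have hL' : (c*d - e*g) = (c*μ - e)*g := by linarith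
  rw [hR', hL'] at h4
  have hfin : c*a^2*(c*μ - e)^2 = 0 := by linear_combination h4
  exact (mul_ne_zero (mul_ne_zero hc (pow_ne_zero 2 ha0)) (pow_ne_zero 2 hK)) hfin

set_option maxHeartbeats 2000000 in
theorem quadrics_cannot_coincide_on_open_piece {n : ℕ}
    (A B : Matrix (Fin n) (Fin n) ℝ) (hA : A.IsSymm) (hB : B.IsSymm)
    (hli : LinearIndependent ℝ ![A, B]) (hrA : 3 ≤ A.rank) (hrB : 3 ≤ B.rank)
    (hAposs : ¬ A.PosSemidef) (hAnegs : ¬ (-A).PosSemidef)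
    (hBposs : ¬ B.PosSemidef) (hBnegs : ¬ (-B).PosSemidef) :
    ¬ ∃ V : Set (Fin n → ℝ), IsOpen V ∧
      (V ∩ {x : Fin n → ℝ | x ⬝ᵥ A.mulVec x = 0}).Nonempty ∧
      V ∩ {x : Fin n → ℝ | x ⬝ᵥ A.mulVec x = 0} ⊆
        {x : Fin n → ℝ | x ⬝ᵥ B.mulVec x = 0} := by
  rintro ⟨V, hVopen, ⟨p₀, hp₀V, hp₀A⟩, hsub⟩
  simp only [Set.mem_setOf_eq] at hp₀A
  have hsub' : ∀ x ∈ V, x ⬝ᵥ A *ᵥ x = 0 → x ⬝ᵥ B *ᵥ x = 0 := fun x hx hq => hsub ⟨hx, hq⟩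
  -- Hermitian
  have hAH : A.IsHermitian := by
    rw [Matrix.IsHermitian, conjTranspose_eq_transpose_of_trivial]; exact hA
  -- indefinite witnesses
  obtain ⟨w, hW⟩ : ∃ w, w ⬝ᵥ A *ᵥ w < 0 := by
    by_contra h
    push_neg at h
    exact hAposs (posSemidef_iff_dotProduct_mulVec.mpr ⟨hAH, fun x => by simpa using h x⟩)
  obtain ⟨u, hU⟩ : ∃ u, 0 < u ⬝ᵥ A *ᵥ u := by
    by_contra h
    push_neg at h
    refine hAnegs (posSemidef_iff_dotProduct_mulVec.mpr ⟨hAH.neg, fun x => ?_⟩)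
    have := h x
    simp only [star_trivial, neg_mulVec, dotProduct_neg]
    linarith
  -- a null vector with nonzero gradient
  obtain ⟨v, hQv, hAv⟩ : ∃ v, v ⬝ᵥ A *ᵥ v = 0 ∧ A *ᵥ v ≠ 0 := by
    set Uu := u ⬝ᵥ A *ᵥ u with hUu
    set Ww := w ⬝ᵥ A *ᵥ w with hWw
    set γ := u ⬝ᵥ A *ᵥ w with hγ
    have hdisc : (0:ℝ) ≤ 4*γ^2 - 4*Ww*Uu := by nlinarith
    set S := Real.sqrt (4*γ^2 - 4*Ww*Uu) with hS
    have hS2 : S^2 = 4*γ^2 - 4*Ww*Uu := Real.sq_sqrt hdisc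
    have hWne : Ww ≠ 0 := ne_of_lt hW
    set s := (-2*γ - S)/(2*Ww) with hs
    have hσ : 2*Ww*s = -2*γ - S := by rw [hs]; field_simp
    have hQ0 : Uu + 2*γ*s + Ww*s^2 = 0 := by
      have h4W : 4*Ww*(Uu + 2*γ*s + Ww*s^2) = (2*Ww*s)^2 + 4*γ*(2*Ww*s) + 4*Uu*Ww := by ring
      rw [hσ] at h4W
      have hz : 4*Ww*(Uu + 2*γ*s + Ww*s^2) = 0 := by rw [h4W]; linear_combination hS2
      rcases mul_eq_zero.mp hz with h | h
      · exact absurd h (by intro hh; apply hWne; linarith)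
      · exact h
    refine ⟨u + s•w, ?_, ?_⟩
    · rw [expand2 A hA u w s]
      linear_combination hQ0
    · intro h0
      have hu2 : u ⬝ᵥ A *ᵥ (u + s•w) = 0 := by rw [h0, dotProduct_zero]
      have hw2 : w ⬝ᵥ A *ᵥ (u + s•w) = 0 := by rw [h0, dotProduct_zero]
      rw [dlin A u w u s] at hu2
      rw [dlin A u w w s] at hw2
      rw [dot_symm A hA w u] at hw2
      have hUs : Uu = s^2*Ww := by linear_combination hu2 - s*hw2
      nlinarith [mul_nonneg (sq_nonneg s) (neg_nonneg.mpr (le_of_lt hW))]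
  -- a good base point p on the quadric with nonzero gradient
  obtain ⟨p, hpV, hpA, hAp⟩ : ∃ p, p ∈ V ∧ p ⬝ᵥ A *ᵥ p = 0 ∧ A *ᵥ p ≠ 0 := by
    by_cases hp₀ : A *ᵥ p₀ = 0
    · obtain ⟨ε, hε, hball⟩ := Metric.isOpen_iff.mp hVopen p₀ hp₀V
      set t := ε/(2*(‖v‖+1)) with ht
      have htpos : 0 < t := by positivity
      refine ⟨p₀ + t•v, ?_, ?_, ?_⟩
      · apply hball
        rw [Metric.mem_ball, dist_eq_norm, add_sub_cancel_left, norm_smul]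
        have h1 : ‖t•v‖ ≤ t*(‖v‖+1) := by
          rw [norm_smul]
          simp only [Real.norm_eq_abs, abs_of_pos htpos]
          nlinarith [norm_nonneg v]
        have h2 : t*(‖v‖+1) = ε/2 := by
          rw [ht]; field_simp
        simp only [Real.norm_eq_abs, abs_of_pos htpos]
        nlinarith [norm_nonneg v]
      · rw [expand2 A hA p₀ v t, hp₀A, hQv]
        have : p₀ ⬝ᵥ A *ᵥ v = 0 := by
          rw [dot_symm A hA p₀ v, hp₀, dotProduct_zero]
        rw [this]; ring
      · rw [mulVec_add, mulVec_smul, hp₀, zero_add]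
        exact smul_ne_zero (ne_of_gt htpos) hAv
    · exact ⟨p₀, hp₀V, hp₀A, hp₀⟩
  have hpB : p ⬝ᵥ B *ᵥ p = 0 := hsub' p hpV hpA
  -- q₁ with p⬝ᵥA*ᵥq₁ = 1
  set w₁ := A *ᵥ p with hw₁
  set r := w₁ ⬝ᵥ w₁ with hrdef
  have hr : r ≠ 0 := fun h => hAp (dotProduct_self_eq_zero.mp h)
  set q₁ := r⁻¹ • w₁ with hq₁
  have hpAw₁ : p ⬝ᵥ A *ᵥ w₁ = r := by
    rw [dot_symm A hA p w₁, hrdef, hw₁]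
  have hpq₁ : p ⬝ᵥ A *ᵥ q₁ = 1 := by
    rw [hq₁, mulVec_smul, dotProduct_smul, smul_eq_mul, hpAw₁, inv_mul_cancel₀ hr]
  -- v₀ : tangent direction with nonzero Q_A
  obtain ⟨v₀, hv₀, ha₀⟩ : ∃ v₀, p ⬝ᵥ A *ᵥ v₀ = 0 ∧ v₀ ⬝ᵥ A *ᵥ v₀ ≠ 0 := by
    by_contra hno
    push_neg at hno
    have hpol : ∀ y z : Fin n → ℝ, p ⬝ᵥ A *ᵥ y = 0 → p ⬝ᵥ A *ᵥ z = 0 →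
        y ⬝ᵥ A *ᵥ z = 0 := by
      intro y z hy hz
      have hyz : p ⬝ᵥ A *ᵥ (y + (1:ℝ)•z) = 0 := by
        rw [dlin A y z p 1, hy, hz]; ring
      have h1 := hno (y + (1:ℝ)•z) hyz
      have h2 := hno y hy
      have h3 := hno z hz
      rw [expand2 A hA y z 1, h2, h3] at h1
      linarith
    have hall : ∀ x : Fin n → ℝ, A *ᵥ x ∈ Submodule.span ℝ {w₁, A *ᵥ q₁} := by
      intro x
      set cx := p ⬝ᵥ A *ᵥ x with hcx
      set x' := x - cx • q₁ with hx'
      have hx'H : p ⬝ᵥ A *ᵥ x' = 0 := by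
        rw [hx', sub_eq_add_neg, ← neg_smul, dlin A x q₁ p (-cx), hpq₁]
        ring
      set z := A *ᵥ x' with hz
      have hzw : ∀ y : Fin n → ℝ, p ⬝ᵥ A *ᵥ y = 0 → y ⬝ᵥ z = 0 := by
        intro y hy
        rw [hz]
        exact hpol y x' hy hx'H
      set ρ := (z ⬝ᵥ w₁)/r with hρ
      set z' := z - ρ • w₁ with hz'
      have hz'H : p ⬝ᵥ A *ᵥ z' = 0 := by
        rw [hz', sub_eq_add_neg, ← neg_smul, dlin A z w₁ p (-ρ), hpAw₁,
          dot_symm A hA p z, hρ]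
        field_simp
        rw [← hw₁]; ring
      have hz'z : z' ⬝ᵥ z = 0 := hzw z' hz'H
      have hz'w₁ : z' ⬝ᵥ w₁ = 0 := by
        rw [hz', sub_dotProduct, smul_dotProduct, smul_eq_mul, hρ, ← hrdef]
        field_simp
        ring
      have hz'0 : z' ⬝ᵥ z' = 0 := by
        calc z' ⬝ᵥ z' = z' ⬝ᵥ z - ρ * (z' ⬝ᵥ w₁) := by
              rw [hz']
              conv_lhs => rw [dotProduct_sub, dotProduct_smul, smul_eq_mul]
          _ = 0 := by rw [hz'z, hz'w₁]; ring
      have hzspan : z = ρ • w₁ := by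
        have h0 := dotProduct_self_eq_zero.mp hz'0
        rw [hz'] at h0
        exact sub_eq_zero.mp h0
      have hxdec : A *ᵥ x = ρ • w₁ + cx • (A *ᵥ q₁) := by
        have : x = x' + cx • q₁ := by rw [hx', sub_add_cancel]
        rw [this, mulVec_add, mulVec_smul, ← hz, hzspan]
      rw [hxdec]
      exact Submodule.mem_span_pair.mpr ⟨ρ, cx, rfl⟩
    -- rank ≤ 2, contradiction
    have hle : LinearMap.range A.mulVecLin ≤ Submodule.span ℝ {w₁, A *ᵥ q₁} := by
      rintro y ⟨x, rfl⟩
      exact hall x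
    have h2 : ({w₁, A *ᵥ q₁} : Set (Fin n → ℝ)) = Set.range ![w₁, A *ᵥ q₁] := by
      simp [Set.ext_iff, Fin.exists_fin_two]
      intro x; tauto
    have h3 : Module.finrank ℝ (Submodule.span ℝ ({w₁, A *ᵥ q₁} : Set (Fin n → ℝ))) ≤ 2 := by
      rw [h2]
      have := finrank_range_le_card (R := ℝ) ![w₁, A *ᵥ q₁]
      simpa [Set.finrank] using this
    have : A.rank ≤ 2 := le_trans (Submodule.finrank_mono hle) h3
    omega
  -- build q with p⬝ᵥA*ᵥq = 1 and Q_A q ≠ 0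
  obtain ⟨s₂, hq₂⟩ : ∃ s₂ : ℝ, (q₁ + s₂•v₀) ⬝ᵥ A *ᵥ (q₁ + s₂•v₀) ≠ 0 := by
    by_contra hcon
    push_neg at hcon
    have h0 := hcon 0
    have h1 := hcon 1
    have h2 := hcon (-1)
    rw [expand2 A hA q₁ v₀ 0] at h0
    rw [expand2 A hA q₁ v₀ 1] at h1
    rw [expand2 A hA q₁ v₀ (-1)] at h2
    apply ha₀
    nlinarith [h0, h1, h2]
  set q := q₁ + s₂•v₀ with hqdef
  have hpq : p ⬝ᵥ A *ᵥ q = 1 := by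
    rw [hqdef, dlin A q₁ v₀ p s₂, hpq₁, hv₀]; ring
  have hc : q ⬝ᵥ A *ᵥ q ≠ 0 := hq₂
  set μ := p ⬝ᵥ B *ᵥ q with hμdef
  -- the key per-direction facts
  have key : ∀ h : Fin n → ℝ, p ⬝ᵥ A *ᵥ h = 0 →
      (p ⬝ᵥ B *ᵥ h) * (h ⬝ᵥ A *ᵥ h) = 0 ∧
      h ⬝ᵥ B *ᵥ h - μ*(h ⬝ᵥ A *ᵥ h) - 2*(p ⬝ᵥ B *ᵥ h)*(q ⬝ᵥ A *ᵥ h) = 0 ∧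
      2*(q ⬝ᵥ B *ᵥ h) - 2*μ*(q ⬝ᵥ A *ᵥ h) - (p ⬝ᵥ B *ᵥ h)*(q ⬝ᵥ A *ᵥ q) = 0 := by
    intro h hh
    have hfin : {s : ℝ | (q + s•h) ⬝ᵥ A *ᵥ (q + s•h) = 0}.Finite := by
      apply Set.Finite.subset (Polynomial.finite_setOf_isRoot
        (p := C (q ⬝ᵥ A *ᵥ q) + C (2*(q ⬝ᵥ A *ᵥ h)) * X + C (h ⬝ᵥ A *ᵥ h) * X^2) ?_)
      · intro s hs
        simp only [Set.mem_setOf_eq] at hs ⊢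
        rw [expand2 A hA q h s] at hs
        simp only [Polynomial.IsRoot, Polynomial.eval_add, Polynomial.eval_mul,
          Polynomial.eval_pow, Polynomial.eval_C, Polynomial.eval_X]
        linarith
      · intro hP
        have := congrArg (fun pp : ℝ[X] => pp.coeff 0) hP
        simp [coeff_add, coeff_C_mul, coeff_X_pow, coeff_C] at this
        exact hc this
    have hinf : {s : ℝ | (q + s•h) ⬝ᵥ A *ᵥ (q + s•h) ≠ 0}.Infinite := by
      have := hfin.infinite_compl
      rwa [Set.compl_setOf] at this
    have hvan : ∀ s ∈ {s : ℝ | (q + s•h) ⬝ᵥ A *ᵥ (q + s•h) ≠ 0},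
        (q ⬝ᵥ B *ᵥ q - (q ⬝ᵥ A *ᵥ q)*μ)
        + (2*(q ⬝ᵥ B *ᵥ h) - 2*μ*(q ⬝ᵥ A *ᵥ h) - (p ⬝ᵥ B *ᵥ h)*(q ⬝ᵥ A *ᵥ q))*s
        + (h ⬝ᵥ B *ᵥ h - μ*(h ⬝ᵥ A *ᵥ h) - 2*(p ⬝ᵥ B *ᵥ h)*(q ⬝ᵥ A *ᵥ h))*s^2
        + (-(p ⬝ᵥ B *ᵥ h)*(h ⬝ᵥ A *ᵥ h))*s^3 + 0*s^4 = 0 := by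
      intro s hs
      simp only [Set.mem_setOf_eq] at hs
      have hpqs : p ⬝ᵥ A *ᵥ (q + s•h) = 1 := by
        rw [dlin A q h p s, hpq, hh]; ring
      have hKs := lemK A B hA hB V hVopen hsub' p v₀ hpV hpA hpB hv₀ ha₀
        (q + s•h) hpqs hs
      rw [expand2 A hA q h s, expand2 B hB q h s, dlin B q h p s] at hKs
      linear_combination hKs
    obtain ⟨-, h1, h2, h3, -⟩ := poly4_zero _ _ _ _ _ _ hinf hvan
    refine ⟨by linarith, by linarith, by linarith⟩
  -- the linear functional p⬝ᵥB*ᵥ· vanishes on the tangent hyperplane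
  have hαv₀ : p ⬝ᵥ B *ᵥ v₀ = 0 := (mul_eq_zero.mp (key v₀ hv₀).1).resolve_right ha₀
  have hα : ∀ h : Fin n → ℝ, p ⬝ᵥ A *ᵥ h = 0 → p ⬝ᵥ B *ᵥ h = 0 := by
    intro h hh
    by_cases hah : h ⬝ᵥ A *ᵥ h = 0
    · -- perturb by v₀
      have hmix : ∀ s : ℝ, s^2*(v₀ ⬝ᵥ A *ᵥ v₀) + 2*s*(h ⬝ᵥ A *ᵥ v₀) ≠ 0 →
          p ⬝ᵥ B *ᵥ h = 0 := by
        intro s hs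
        have hh' : p ⬝ᵥ A *ᵥ (h + s•v₀) = 0 := by
          rw [dlin A h v₀ p s, hh, hv₀]; ring
        have ha' : (h + s•v₀) ⬝ᵥ A *ᵥ (h + s•v₀) ≠ 0 := by
          rw [expand2 A hA h v₀ s, hah]
          intro hcc
          exact hs (by linarith)
        have := (mul_eq_zero.mp (key (h + s•v₀) hh').1).resolve_right ha'
        rw [dlin B h v₀ p s, hαv₀] at this
        linarith
      by_cases hc1 : (v₀ ⬝ᵥ A *ᵥ v₀) + 2*(h ⬝ᵥ A *ᵥ v₀) ≠ 0
      · exact hmix 1 (by rw [one_pow]; intro hcc; exact hc1 (by linarith))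
      · push_neg at hc1
        apply hmix (-1)
        intro hcc
        apply ha₀
        nlinarith [hc1, hcc]
    · exact (mul_eq_zero.mp (key h hh).1).resolve_right hah
  -- all the pieces of B - μA vanish
  have hQH : ∀ h : Fin n → ℝ, p ⬝ᵥ A *ᵥ h = 0 → h ⬝ᵥ B *ᵥ h = μ*(h ⬝ᵥ A *ᵥ h) := by
    intro h hh
    have hk := (key h hh).2.1
    have h0 := hα h hh
    linear_combination hk + 2*(q ⬝ᵥ A *ᵥ h)*h0
  have hqH : ∀ h : Fin n → ℝ, p ⬝ᵥ A *ᵥ h = 0 → q ⬝ᵥ B *ᵥ h = μ*(q ⬝ᵥ A *ᵥ h) := by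
    intro h hh
    have hk := (key h hh).2.2
    have h0 := hα h hh
    linear_combination hk/2 + ((q ⬝ᵥ A *ᵥ q)/2)*h0
  have hqq : q ⬝ᵥ B *ᵥ q = μ*(q ⬝ᵥ A *ᵥ q) := by
    have := lemK A B hA hB V hVopen hsub' p v₀ hpV hpA hpB hv₀ ha₀ q hpq hc
    linarith [this]
  have hcross : ∀ h h' : Fin n → ℝ, p ⬝ᵥ A *ᵥ h = 0 → p ⬝ᵥ A *ᵥ h' = 0 →
      h ⬝ᵥ B *ᵥ h' = μ*(h ⬝ᵥ A *ᵥ h') := by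
    intro h h' hh hh'
    have hsum : p ⬝ᵥ A *ᵥ (h + (1:ℝ)•h') = 0 := by
      rw [dlin A h h' p 1, hh, hh']; ring
    have h1 := hQH (h + (1:ℝ)•h') hsum
    rw [expand2 A hA h h' 1, expand2 B hB h h' 1] at h1
    have h2 := hQH h hh
    have h3 := hQH h' hh'
    linarith
  -- conclude B = μ • A
  have hBA : ∀ x y : Fin n → ℝ, x ⬝ᵥ B *ᵥ y = μ*(x ⬝ᵥ A *ᵥ y) := by
    intro x y
    set cx := p ⬝ᵥ A *ᵥ x with hcx
    set cy := p ⬝ᵥ A *ᵥ y with hcy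
    set hx := x - cx • q with hhx
    set hy := y - cy • q with hhy
    have hxH : p ⬝ᵥ A *ᵥ hx = 0 := by
      rw [hhx, sub_eq_add_neg, ← neg_smul, dlin A x q p (-cx), hpq]; ring
    have hyH : p ⬝ᵥ A *ᵥ hy = 0 := by
      rw [hhy, sub_eq_add_neg, ← neg_smul, dlin A y q p (-cy), hpq]; ring
    have e1 : hx ⬝ᵥ B *ᵥ hy = μ*(hx ⬝ᵥ A *ᵥ hy) := hcross hx hy hxH hyH
    have e2 : q ⬝ᵥ B *ᵥ hy = μ*(q ⬝ᵥ A *ᵥ hy) := hqH hy hyH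
    have e3 : hx ⬝ᵥ B *ᵥ q = μ*(hx ⬝ᵥ A *ᵥ q) := by
      rw [dot_symm B hB hx q, dot_symm A hA hx q]
      exact hqH hx hxH
    have hxd : x = hx + cx • q := by rw [hhx, sub_add_cancel]
    have hyd : y = hy + cy • q := by rw [hhy, sub_add_cancel]
    calc x ⬝ᵥ B *ᵥ y = (hx + cx • q) ⬝ᵥ B *ᵥ (hy + cy • q) := by rw [← hxd, ← hyd]
      _ = hx ⬝ᵥ B *ᵥ hy + cy*(hx ⬝ᵥ B *ᵥ q) + cx*(q ⬝ᵥ B *ᵥ hy)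
          + cx*cy*(q ⬝ᵥ B *ᵥ q) := by
          simp only [mulVec_add, mulVec_smul, dotProduct_add, add_dotProduct,
            dotProduct_smul, smul_dotProduct, smul_eq_mul]
          ring
      _ = μ*(hx ⬝ᵥ A *ᵥ hy + cy*(hx ⬝ᵥ A *ᵥ q) + cx*(q ⬝ᵥ A *ᵥ hy)
          + cx*cy*(q ⬝ᵥ A *ᵥ q)) := by
          rw [e1, e2, e3, hqq]; ring
      _ = μ*((hx + cx • q) ⬝ᵥ A *ᵥ (hy + cy • q)) := by
          simp only [mulVec_add, mulVec_smul, dotProduct_add, add_dotProduct,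
            dotProduct_smul, smul_dotProduct, smul_eq_mul]
          ring
      _ = μ*(x ⬝ᵥ A *ᵥ y) := by rw [← hxd, ← hyd]
  have hBeq : B = μ • A := by
    ext i j
    have := hBA (Pi.single i 1) (Pi.single j 1)
    rw [mulVec_single, single_dotProduct, mulVec_single, single_dotProduct] at this
    simpa using this
  -- contradiction with linear independence
  rw [linearIndependent_fin2] at hli
  simp only [Matrix.cons_val_one, Matrix.head_cons, Matrix.cons_val_zero] at hli
  obtain ⟨hB0, hnc⟩ := hli
  rcases eq_or_ne μ 0 with h | h
  · exact hB0 (by simp [hBeq, h])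
  · exact hnc μ⁻¹ (by rw [hBeq, smul_smul, inv_mul_cancel₀ h, one_smul])
end

section
/- Let f(x) = xᵀ𝒜x − 1 and g(x) = xᵀℬx + ξ·x − 1 where 𝒜, ℬ are real symmetric k×k matrices, 𝒜 positive definite, and ξ ∈ ℝᵏ. Suppose f(x) ≤ 0 implies g(x) ≤ 0 for all x ∈ ℝᵏ. Then tr(𝒜) ≥ tr(ℬ); moreover, either f = g identically or tr(𝒜) > tr(ℬ). -/
open Matrix

private lemma smul_quad {k : ℕ} (M : Matrix (Fin k) (Fin k) ℝ) (c : ℝ) (x : Fin k → ℝ) :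
    (c • x) ⬝ᵥ M.mulVec (c • x) = c ^ 2 * (x ⬝ᵥ M.mulVec x) := by
  simp [Matrix.mulVec_smul, smul_dotProduct, dotProduct_smul, smul_eq_mul]
  ring

private lemma neg_quad {k : ℕ} (M : Matrix (Fin k) (Fin k) ℝ) (x : Fin k → ℝ) :
    (-x) ⬝ᵥ M.mulVec (-x) = x ⬝ᵥ M.mulVec x := by
  simp [Matrix.mulVec_neg]

private lemma single_quad {k : ℕ} (M : Matrix (Fin k) (Fin k) ℝ) (i : Fin k) :
    (Pi.single i 1 : Fin k → ℝ) ⬝ᵥ M.mulVec (Pi.single i 1) = M i i := by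
  simp [Matrix.mulVec_single, single_dotProduct]

private lemma pair_quad {k : ℕ} (M : Matrix (Fin k) (Fin k) ℝ) (i j : Fin k) (t : ℝ) :
    ((Pi.single i 1 : Fin k → ℝ) + t • (Pi.single j 1 : Fin k → ℝ)) ⬝ᵥ
      M.mulVec ((Pi.single i 1 : Fin k → ℝ) + t • (Pi.single j 1 : Fin k → ℝ)) =
      M i i + t * M i j + t * M j i + t ^ 2 * M j j := by
  simp [Matrix.mulVec_add, Matrix.mulVec_smul, Matrix.mulVec_single, add_dotProduct,
    dotProduct_add, smul_dotProduct, dotProduct_smul, single_dotProduct, dotProduct_single,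
    smul_eq_mul]
  ring

theorem trace_comparison_of_sublevel_inclusion {k : ℕ}
    (𝒜 ℬ : Matrix (Fin k) (Fin k) ℝ) (h𝒜 : 𝒜.PosDef) (hℬ : ℬ.IsSymm)
    (ξ : Fin k → ℝ)
    (h : ∀ x : Fin k → ℝ, x ⬝ᵥ 𝒜.mulVec x - 1 ≤ 0 → x ⬝ᵥ ℬ.mulVec x + ξ ⬝ᵥ x - 1 ≤ 0) :
    ℬ.trace ≤ 𝒜.trace ∧
      ((∀ x : Fin k → ℝ, x ⬝ᵥ 𝒜.mulVec x - 1 = x ⬝ᵥ ℬ.mulVec x + ξ ⬝ᵥ x - 1) ∨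
        ℬ.trace < 𝒜.trace) := by
  -- normalization: for x ≠ 0, rescale to unit level set
  have norm1 : ∀ x : Fin k → ℝ, x ≠ 0 →
      ∃ c : ℝ, 0 < c ∧ (c • x) ⬝ᵥ 𝒜.mulVec (c • x) = 1 := by
    intro x hx
    have ha : 0 < x ⬝ᵥ 𝒜.mulVec x := by
      have := h𝒜.dotProduct_mulVec_pos hx
      simpa using this
    refine ⟨(Real.sqrt (x ⬝ᵥ 𝒜.mulVec x))⁻¹, by positivity, ?_⟩
    rw [smul_quad]
    have hs : Real.sqrt (x ⬝ᵥ 𝒜.mulVec x) ^ 2 = x ⬝ᵥ 𝒜.mulVec x := Real.sq_sqrt ha.le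
    have hs0 : Real.sqrt (x ⬝ᵥ 𝒜.mulVec x) ≠ 0 := by positivity
    field_simp
    exact hs.symm
  -- key: ℬ's quadratic form is dominated by 𝒜's
  have key : ∀ x : Fin k → ℝ, x ⬝ᵥ ℬ.mulVec x ≤ x ⬝ᵥ 𝒜.mulVec x := by
    intro x
    by_cases hx : x = 0
    · subst hx; simp
    · obtain ⟨c, hc, hy⟩ := norm1 x hx
      set y := c • x with hydef
      have h1 := h y (by rw [hy]; norm_num)
      have h2 := h (-y) (by rw [neg_quad, hy]; norm_num)
      rw [neg_quad, dotProduct_neg] at h2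
      have hb : y ⬝ᵥ ℬ.mulVec y ≤ 1 := by linarith
      rw [hydef, smul_quad] at hb hy
      have hc2 : 0 < c ^ 2 := by positivity
      nlinarith [hc2]
  have diag : ∀ i, ℬ i i ≤ 𝒜 i i := by
    intro i
    have := key (Pi.single i 1)
    rwa [single_quad, single_quad] at this
  have htr : ℬ.trace ≤ 𝒜.trace := by
    unfold Matrix.trace
    exact Finset.sum_le_sum fun i _ => diag i
  refine ⟨htr, ?_⟩
  rcases lt_or_eq_of_le htr with hlt | heq
  · exact Or.inr hlt
  · left
    -- equal traces: diagonals coincide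
    have hdiag : ∀ i, 𝒜 i i = ℬ i i := by
      have hsum : ∑ i, (𝒜 i i - ℬ i i) = 0 := by
        have : ∑ i, (𝒜 i i - ℬ i i) = 𝒜.trace - ℬ.trace := by
          unfold Matrix.trace; rw [Finset.sum_sub_distrib]; rfl
        rw [this, heq, sub_self]
      intro i
      have := (Finset.sum_eq_zero_iff_of_nonneg
        (fun j _ => sub_nonneg.mpr (diag j))).mp hsum i (Finset.mem_univ i)
      linarith
    -- matrices coincide
    have hAB : 𝒜 = ℬ := by
      ext i j
      have hij := key ((Pi.single i 1 : Fin k → ℝ) + (1 : ℝ) • (Pi.single j 1 : Fin k → ℝ))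
      have hij' := key ((Pi.single i 1 : Fin k → ℝ) + (-1 : ℝ) • (Pi.single j 1 : Fin k → ℝ))
      rw [pair_quad, pair_quad] at hij hij'
      have hsymA : 𝒜 j i = 𝒜 i j := by simpa using h𝒜.1.apply i j
      have hsymB : ℬ j i = ℬ i j := hℬ.apply i j
      have h1 := hdiag i
      have h2 := hdiag j
      nlinarith
    -- ξ = 0
    have hξ : ξ = 0 := by
      by_contra hξ
      obtain ⟨c, hc, hy⟩ := norm1 ξ hξ
      have h1 := h (c • ξ) (by rw [hy]; norm_num)
      rw [← hAB, hy, dotProduct_smul, smul_eq_mul] at h1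
      have hpos : 0 < ξ ⬝ᵥ ξ := by
        have hnn : 0 ≤ ξ ⬝ᵥ ξ := Finset.sum_nonneg fun i _ => mul_self_nonneg (ξ i)
        rcases hnn.lt_or_eq with h' | h'
        · exact h'
        · exact absurd ((dotProduct_self_eq_zero).mp h'.symm) hξ
      nlinarith
    intro x
    rw [hAB, hξ, zero_dotProduct, add_zero]
end

section
/- On ℝ⁴ with coordinates (x₁, x₂, y₁, y₂) and the standard symplectic Poisson bracket {f,g} = Σⱼ (∂f/∂yⱼ ∂g/∂xⱼ − ∂f/∂xⱼ ∂g/∂yⱼ), define Q_A(x,y) = x₁y₂ + x₂y₁ and Q_B(x,y) = x₁y₁ − x₂y₂. Then Q_C := {Q_A, Q_B} is a quadratic form proportional to x₁y₂ − x₂y₁, the common zero set {Q_A = 0} ∩ {Q_B = 0} equals {(x,y) : x = 0 or y = 0}, Q_C vanishes on this common zero set, and A, B, C are linearly independent. -/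
open Matrix

noncomputable def QA16 (v : Fin 4 → ℝ) : ℝ := v 0 * v 3 + v 1 * v 2

noncomputable def QB16 (v : Fin 4 → ℝ) : ℝ := v 0 * v 2 - v 1 * v 3

/-- The standard symplectic Poisson bracket on ℝ⁴ with coordinates
(x₁,x₂,y₁,y₂) = (v 0, v 1, v 2, v 3). -/
noncomputable def poissonBracket16 (f g : (Fin 4 → ℝ) → ℝ) (v : Fin 4 → ℝ) : ℝ :=
  (fderiv ℝ f v (Pi.single (2 : Fin 4) (1 : ℝ))) * (fderiv ℝ g v (Pi.single (0 : Fin 4) (1 : ℝ)))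
  - (fderiv ℝ f v (Pi.single (0 : Fin 4) (1 : ℝ))) * (fderiv ℝ g v (Pi.single (2 : Fin 4) (1 : ℝ)))
  + (fderiv ℝ f v (Pi.single (3 : Fin 4) (1 : ℝ))) * (fderiv ℝ g v (Pi.single (1 : Fin 4) (1 : ℝ)))
  - (fderiv ℝ f v (Pi.single (1 : Fin 4) (1 : ℝ))) * (fderiv ℝ g v (Pi.single (3 : Fin 4) (1 : ℝ)))

noncomputable abbrev pr (i : Fin 4) : (Fin 4 → ℝ) →L[ℝ] ℝ := ContinuousLinearMap.proj i

lemma hproj (i : Fin 4) (v : Fin 4 → ℝ) : HasFDerivAt (fun w : Fin 4 → ℝ => w i) (pr i) v :=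
  (ContinuousLinearMap.proj i : (Fin 4 → ℝ) →L[ℝ] ℝ).hasFDerivAt

lemma fderiv_QA (v : Fin 4 → ℝ) (j : Fin 4) :
    fderiv ℝ QA16 v (Pi.single j 1) =
      (Pi.single j 1 : Fin 4 → ℝ) 0 * v 3 + v 0 * (Pi.single j 1 : Fin 4 → ℝ) 3
      + (Pi.single j 1 : Fin 4 → ℝ) 1 * v 2 + v 1 * (Pi.single j 1 : Fin 4 → ℝ) 2 := by
  have h : HasFDerivAt QA16 ((v 0 • pr 3 + v 3 • pr 0) + (v 1 • pr 2 + v 2 • pr 1)) v :=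
    ((hproj 0 v).mul (hproj 3 v)).add ((hproj 1 v).mul (hproj 2 v))
  rw [h.fderiv]
  simp [pr]
  ring

lemma fderiv_QB (v : Fin 4 → ℝ) (j : Fin 4) :
    fderiv ℝ QB16 v (Pi.single j 1) =
      (Pi.single j 1 : Fin 4 → ℝ) 0 * v 2 + v 0 * (Pi.single j 1 : Fin 4 → ℝ) 2
      - (Pi.single j 1 : Fin 4 → ℝ) 1 * v 3 - v 1 * (Pi.single j 1 : Fin 4 → ℝ) 3 := by
  have h : HasFDerivAt QB16 ((v 0 • pr 2 + v 2 • pr 0) - (v 1 • pr 3 + v 3 • pr 1)) v :=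
    ((hproj 0 v).mul (hproj 2 v)).sub ((hproj 1 v).mul (hproj 3 v))
  rw [h.fderiv]
  simp [pr]
  ring

lemma pb_eq (v : Fin 4 → ℝ) :
    poissonBracket16 QA16 QB16 v = -2 * (v 0 * v 3 - v 1 * v 2) := by
  simp only [poissonBracket16, fderiv_QA, fderiv_QB, Pi.single_apply]
  simp (config := { decide := true })
  ring

theorem rank_four_counterexample (A B C : Matrix (Fin 4) (Fin 4) ℝ)
    (hAs : A.IsSymm) (hBs : B.IsSymm) (hCs : C.IsSymm)
    (hA : ∀ v : Fin 4 → ℝ, v ⬝ᵥ A.mulVec v = QA16 v)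
    (hB : ∀ v : Fin 4 → ℝ, v ⬝ᵥ B.mulVec v = QB16 v)
    (hC : ∀ v : Fin 4 → ℝ, v ⬝ᵥ C.mulVec v = poissonBracket16 QA16 QB16 v) :
    (∃ c : ℝ, c ≠ 0 ∧ ∀ v : Fin 4 → ℝ, v ⬝ᵥ C.mulVec v = c * (v 0 * v 3 - v 1 * v 2)) ∧
    {v : Fin 4 → ℝ | QA16 v = 0 ∧ QB16 v = 0} =
      {v : Fin 4 → ℝ | (v 0 = 0 ∧ v 1 = 0) ∨ (v 2 = 0 ∧ v 3 = 0)} ∧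
    (∀ v : Fin 4 → ℝ, QA16 v = 0 → QB16 v = 0 → v ⬝ᵥ C.mulVec v = 0) ∧
    LinearIndependent ℝ ![A, B, C] := by
  have hC' : ∀ v : Fin 4 → ℝ, v ⬝ᵥ C.mulVec v = -2 * (v 0 * v 3 - v 1 * v 2) := by
    intro v; rw [hC v, pb_eq]
  have hset : ∀ v : Fin 4 → ℝ, (QA16 v = 0 ∧ QB16 v = 0) ↔
      ((v 0 = 0 ∧ v 1 = 0) ∨ (v 2 = 0 ∧ v 3 = 0)) := by
    intro v
    constructor
    · rintro ⟨h1, h2⟩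
      simp only [QA16, QB16] at h1 h2
      have key : (v 0 ^ 2 + v 1 ^ 2) * (v 2 ^ 2 + v 3 ^ 2) = 0 := by nlinarith [sq_nonneg (v 0 * v 3 + v 1 * v 2), sq_nonneg (v 0 * v 2 - v 1 * v 3)]
      rcases mul_eq_zero.mp key with h | h
      · left
        constructor <;> nlinarith [sq_nonneg (v 0), sq_nonneg (v 1)]
      · right
        constructor <;> nlinarith [sq_nonneg (v 2), sq_nonneg (v 3)]
    · rintro (⟨h0, h1⟩ | ⟨h2, h3⟩)
      · simp [QA16, QB16, h0, h1]
      · simp [QA16, QB16, h2, h3]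
  refine ⟨⟨-2, by norm_num, hC'⟩, Set.ext fun v => hset v, ?_, ?_⟩
  · intro v h1 h2
    rw [hC' v]
    rcases (hset v).mp ⟨h1, h2⟩ with ⟨h0, h1'⟩ | ⟨h2', h3⟩
    · rw [h0, h1']; ring
    · rw [h2', h3]; ring
  · rw [Fintype.linearIndependent_iff]
    intro g hg
    have key : ∀ v : Fin 4 → ℝ,
        g 0 * QA16 v + g 1 * QB16 v + g 2 * (-2 * (v 0 * v 3 - v 1 * v 2)) = 0 := by
      intro v
      have := congrArg (fun M : Matrix (Fin 4) (Fin 4) ℝ => v ⬝ᵥ M.mulVec v) hg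
      simp only [Fin.sum_univ_three] at this
      simpa [Matrix.add_mulVec, Matrix.smul_mulVec, dotProduct_add,
        dotProduct_smul, smul_eq_mul, hA v, hB v, hC' v] using this
    have k1 := key ![1, 0, 0, 1]
    have k2 := key ![0, 1, 1, 0]
    have k3 := key ![1, 0, 1, 0]
    norm_num [QA16, QB16, Matrix.cons_val_zero, Matrix.cons_val_one, Matrix.head_cons, Matrix.cons_val_two, Matrix.tail_cons, Matrix.cons_val_three] at k1 k2 k3
    intro i
    fin_cases i <;> simp <;> linarith
end

section
/- Let A, B be real symmetric n×n matrices forming a non-dissipative pair with A, B linearly independent and minrank{A,B} = 2. Then there exist linearly independent vectors ξ, η ∈ ℝⁿ and a nonzero element D ∈ span_ℝ{A,B} with xᵀDx = (ξ·x)(η·x) for all x; in particular every connected subset of the transversal intersection locus N = {x : Q_A(x)=Q_B(x)=0, Ax ∧ Bx ≠ 0} is contained in a hyperplane of ℝⁿ. -/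
open Matrix

theorem minrank_two_locus_in_hyperplane {n : ℕ}
    (A B : Matrix (Fin n) (Fin n) ℝ) (hA : A.IsSymm) (hB : B.IsSymm)
    (hli : LinearIndependent ℝ ![A, B])
    (hnd : ∀ F ∈ Submodule.span ℝ ({A, B} : Set (Matrix (Fin n) (Fin n) ℝ)),
      F.PosSemidef → F = 0)
    (hmin_ex : ∃ F ∈ Submodule.span ℝ ({A, B} : Set (Matrix (Fin n) (Fin n) ℝ)),
      F ≠ 0 ∧ F.rank = 2)
    (hmin_le : ∀ F ∈ Submodule.span ℝ ({A, B} : Set (Matrix (Fin n) (Fin n) ℝ)),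
      F ≠ 0 → 2 ≤ F.rank) :
    ∃ (ξ η : Fin n → ℝ) (D : Matrix (Fin n) (Fin n) ℝ),
      LinearIndependent ℝ ![ξ, η] ∧
      D ∈ Submodule.span ℝ ({A, B} : Set (Matrix (Fin n) (Fin n) ℝ)) ∧ D ≠ 0 ∧
      (∀ x : Fin n → ℝ, x ⬝ᵥ D.mulVec x = (ξ ⬝ᵥ x) * (η ⬝ᵥ x)) ∧
      ∀ N : Set (Fin n → ℝ), IsPreconnected N →
        (∀ x ∈ N, x ⬝ᵥ A.mulVec x = 0 ∧ x ⬝ᵥ B.mulVec x = 0 ∧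
          LinearIndependent ℝ ![A.mulVec x, B.mulVec x]) →
        ∃ ν : Fin n → ℝ, ν ≠ 0 ∧ ∀ x ∈ N, ν ⬝ᵥ x = 0 := by
  classical
  obtain ⟨D, hDmem, hDne, hDrank⟩ := hmin_ex
  -- D is symmetric
  have hsymm_all : ∀ C ∈ Submodule.span ℝ ({A, B} : Set (Matrix (Fin n) (Fin n) ℝ)),
      C.IsSymm := by
    intro C hC
    induction hC using Submodule.span_induction with
    | mem x hx =>
      rcases hx with rfl | hx
      · exact hA
      · rw [Set.mem_singleton_iff] at hx; subst hx; exact hB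
    | zero => exact Matrix.isSymm_zero
    | add x y _ _ hx hy => exact hx.add hy
    | smul c x _ hx => unfold Matrix.IsSymm at *; rw [Matrix.transpose_smul, hx]
  have hDsymm : D.IsSymm := hsymm_all D hDmem
  have hD : D.IsHermitian := by
    rw [Matrix.IsHermitian, Matrix.conjTranspose_eq_transpose_of_trivial]; exact hDsymm
  set lam := hD.eigenvalues with hlam
  set w : Fin n → Fin n → ℝ := fun k => (hD.eigenvectorBasis k : Fin n → ℝ) with hw
  have hmv : ∀ k, D *ᵥ w k = lam k • w k := hD.mulVec_eigenvectorBasis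
  have hinner : ∀ (u v : EuclideanSpace ℝ (Fin n)),
      (inner ℝ u v : ℝ) = (u : Fin n → ℝ) ⬝ᵥ (v : Fin n → ℝ) := by
    intro u v
    simp [PiLp.inner_apply, dotProduct, mul_comm]
  have horth : ∀ k l, w k ⬝ᵥ w l = if k = l then (1 : ℝ) else 0 := by
    intro k l
    rw [← hinner]
    exact orthonormal_iff_ite.mp hD.eigenvectorBasis.orthonormal k l
  have hexp : ∀ x : Fin n → ℝ, x = ∑ k, (w k ⬝ᵥ x) • w k := by
    intro x
    have h := hD.eigenvectorBasis.sum_repr' (WithLp.toLp 2 x)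
    conv_lhs => rw [← WithLp.ofLp_toLp 2 x, ← h]
    simp [hinner, w]
  have hDx : ∀ x : Fin n → ℝ, D *ᵥ x = ∑ k, (lam k * (w k ⬝ᵥ x)) • w k := by
    intro x
    conv_lhs => rw [hexp x]
    rw [← Matrix.mulVecLin_apply, map_sum]
    refine Finset.sum_congr rfl fun k _ => ?_
    rw [LinearMap.map_smul, Matrix.mulVecLin_apply, hmv, smul_smul, mul_comm]
  have hQ : ∀ x : Fin n → ℝ, x ⬝ᵥ D *ᵥ x = ∑ k, lam k * (w k ⬝ᵥ x) ^ 2 := by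
    intro x
    have hdots : ∀ (u : Fin n → ℝ) (f : Fin n → Fin n → ℝ),
        u ⬝ᵥ (∑ k, f k) = ∑ k, u ⬝ᵥ f k := by
      intro u f
      simp only [dotProduct, Finset.sum_apply, Finset.mul_sum]
      exact Finset.sum_comm
    rw [hDx x, hdots]
    refine Finset.sum_congr rfl fun k _ => ?_
    rw [dotProduct_smul, smul_eq_mul, dotProduct_comm]
    ring
  -- a negative and a positive eigenvalue exist
  have hneg : ∃ k, lam k < 0 := by
    by_contra h
    push_neg at h
    have : D.PosSemidef := by
      refine Matrix.PosSemidef.of_dotProduct_mulVec_nonneg hD fun x => ?_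
      rw [star_trivial, hQ x]
      exact Finset.sum_nonneg fun k _ => mul_nonneg (h k) (sq_nonneg _)
    exact hDne (hnd D hDmem this)
  have hpos : ∃ k, 0 < lam k := by
    by_contra h
    push_neg at h
    have hmem' : -D ∈ Submodule.span ℝ ({A, B} : Set (Matrix (Fin n) (Fin n) ℝ)) :=
      Submodule.neg_mem _ hDmem
    have hpsd : (-D).PosSemidef := by
      refine Matrix.PosSemidef.of_dotProduct_mulVec_nonneg hD.neg fun x => ?_
      rw [star_trivial, Matrix.neg_mulVec, dotProduct_neg, hQ x]
      rw [← Finset.sum_neg_distrib]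
      exact Finset.sum_nonneg fun k _ => by nlinarith [h k, sq_nonneg (w k ⬝ᵥ x)]
    have := hnd _ hmem' hpsd
    exact hDne (by simpa [neg_eq_zero] using this)
  obtain ⟨i, hi⟩ := hpos
  obtain ⟨j, hj⟩ := hneg
  have hij : i ≠ j := fun h => by rw [h] at hi; linarith
  -- exactly two nonzero eigenvalues, so all others vanish
  have hcard : (Finset.univ.filter fun k => lam k ≠ 0).card = 2 := by
    have h1 := hD.rank_eq_card_non_zero_eigs
    rw [hDrank] at h1
    rw [← Fintype.card_subtype]
    exact h1.symm
  have hzero : ∀ k, k ≠ i → k ≠ j → lam k = 0 := by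
    intro k hki hkj
    by_contra hk
    have hsub : ({i, j, k} : Finset (Fin n)) ⊆ Finset.univ.filter fun l => lam l ≠ 0 := by
      intro l hl
      simp only [Finset.mem_insert, Finset.mem_singleton] at hl
      rcases hl with rfl | rfl | rfl <;> simp [Finset.mem_filter]
      · exact ne_of_gt hi
      · exact ne_of_lt hj
      · exact hk
    have hc3 : ({i, j, k} : Finset (Fin n)).card = 3 := by
      rw [Finset.card_insert_of_notMem (by simp [hij, hki.symm]),
        Finset.card_insert_of_notMem (by simp [hkj.symm]), Finset.card_singleton]
    have := Finset.card_le_card hsub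
    rw [hc3, hcard] at this
    omega
  have hsum : ∀ g : Fin n → ℝ, (∀ k, k ≠ i → k ≠ j → g k = 0) → ∑ k, g k = g i + g j := by
    intro g hg
    rw [← Finset.sum_subset (Finset.subset_univ ({i, j} : Finset (Fin n)))]
    · rw [Finset.sum_insert (by simp [hij]), Finset.sum_singleton]
    · intro k _ hk
      simp only [Finset.mem_insert, Finset.mem_singleton, not_or] at hk
      exact hg k hk.1 hk.2
  set a := Real.sqrt (lam i) with ha_def
  set c := Real.sqrt (-lam j) with hc_def
  have ha : 0 < a := Real.sqrt_pos.mpr hi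
  have hc : 0 < c := Real.sqrt_pos.mpr (by linarith)
  have ha2 : a ^ 2 = lam i := Real.sq_sqrt hi.le
  have hc2 : c ^ 2 = -lam j := Real.sq_sqrt (by linarith)
  set ξ := a • w i + c • w j with hξ_def
  set η := a • w i - c • w j with hη_def
  have hxi : ∀ x : Fin n → ℝ, ξ ⬝ᵥ x = a * (w i ⬝ᵥ x) + c * (w j ⬝ᵥ x) := by
    intro x
    simp [hξ_def, add_dotProduct, smul_dotProduct]
  have heta : ∀ x : Fin n → ℝ, η ⬝ᵥ x = a * (w i ⬝ᵥ x) - c * (w j ⬝ᵥ x) := by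
    intro x
    simp [hη_def, sub_dotProduct, smul_dotProduct]
  have hprod : ∀ x : Fin n → ℝ, x ⬝ᵥ D *ᵥ x = (ξ ⬝ᵥ x) * (η ⬝ᵥ x) := by
    intro x
    rw [hQ x, hsum _ (fun k hki hkj => by rw [hzero k hki hkj, zero_mul]), hxi, heta]
    have hlj : lam j = -(c ^ 2) := by linarith
    rw [← ha2, hlj]
    ring
  -- dot products of ξ, η with the eigenvectors
  have hxwi : ξ ⬝ᵥ w i = a := by rw [hxi, horth, horth]; simp [hij.symm]
  have hxwj : ξ ⬝ᵥ w j = c := by rw [hxi, horth, horth]; simp [hij]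
  have hewi : η ⬝ᵥ w i = a := by rw [heta, horth, horth]; simp [hij.symm]
  have hewj : η ⬝ᵥ w j = -c := by rw [heta, horth, horth]; simp [hij]
  have hli2 : LinearIndependent ℝ ![ξ, η] := by
    rw [linearIndependent_fin2]
    constructor
    · simp only [Matrix.cons_val_one, Matrix.head_cons, Matrix.cons_val_zero]
      intro h
      rw [h] at hewi
      simp only [zero_dotProduct] at hewi
      exact absurd hewi.symm (ne_of_gt ha)
    · intro t ht
      simp only [Matrix.cons_val_one, Matrix.head_cons, Matrix.cons_val_zero] at ht
      have h1 : (t • η) ⬝ᵥ w i = ξ ⬝ᵥ w i := by rw [ht]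
      have h2 : (t • η) ⬝ᵥ w j = ξ ⬝ᵥ w j := by rw [ht]
      rw [smul_dotProduct, hewi, hxwi, smul_eq_mul] at h1
      rw [smul_dotProduct, hewj, hxwj, smul_eq_mul] at h2
      have ht1 : t = 1 := by
        have := mul_right_cancel₀ (ne_of_gt ha) (h1.trans (one_mul a).symm)
        exact this
      rw [ht1, one_mul] at h2
      linarith
  have hker : ∀ x : Fin n → ℝ, ξ ⬝ᵥ x = 0 → η ⬝ᵥ x = 0 → D *ᵥ x = 0 := by
    intro x h1 h2
    rw [hxi] at h1
    rw [heta] at h2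
    have h3 : a * (w i ⬝ᵥ x) = 0 := by linarith
    have h4 : c * (w j ⬝ᵥ x) = 0 := by linarith
    have hyi : w i ⬝ᵥ x = 0 := (mul_eq_zero.mp h3).resolve_left (ne_of_gt ha)
    have hyj : w j ⬝ᵥ x = 0 := (mul_eq_zero.mp h4).resolve_left (ne_of_gt hc)
    rw [hDx x]
    refine Finset.sum_eq_zero fun k _ => ?_
    rcases eq_or_ne k i with rfl | hki
    · rw [hyi, mul_zero, zero_smul]
    rcases eq_or_ne k j with rfl | hkj
    · rw [hyj, mul_zero, zero_smul]
    rw [hzero k hki hkj, zero_mul, zero_smul]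
  refine ⟨ξ, η, D, hli2, hDmem, hDne, hprod, ?_⟩
  -- the locus statement
  intro N hNconn hNprop
  have hξne : ξ ≠ 0 := by
    have := hli2.ne_zero 0
    simpa using this
  have hηne : η ≠ 0 := by
    have := hli2.ne_zero 1
    simpa using this
  obtain ⟨p, q, hpq⟩ := Submodule.mem_span_pair.mp hDmem
  have hQD0 : ∀ x ∈ N, (ξ ⬝ᵥ x) * (η ⬝ᵥ x) = 0 := by
    intro x hx
    obtain ⟨hQA, hQB, _⟩ := hNprop x hx
    rw [← hprod x, ← hpq]
    rw [Matrix.add_mulVec, Matrix.smul_mulVec, Matrix.smul_mulVec,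
      dotProduct_add, dotProduct_smul, dotProduct_smul, hQA, hQB]
    simp
  have hnotboth : ∀ x ∈ N, ¬(ξ ⬝ᵥ x = 0 ∧ η ⬝ᵥ x = 0) := by
    rintro x hx ⟨h1, h2⟩
    obtain ⟨_, _, hLI⟩ := hNprop x hx
    have hDx0 := hker x h1 h2
    rw [← hpq, Matrix.add_mulVec, Matrix.smul_mulVec, Matrix.smul_mulVec] at hDx0
    have hsum0 : ∑ k : Fin 2, (![p, q] k) • (![A *ᵥ x, B *ᵥ x] k) = 0 := by
      rw [Fin.sum_univ_two]
      simpa using hDx0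
    have := Fintype.linearIndependent_iff.mp hLI ![p, q] hsum0
    have hp0 : p = 0 := this 0
    have hq0 : q = 0 := this 1
    apply hDne
    rw [← hpq, hp0, hq0]
    simp
  set U := {x : Fin n → ℝ | ξ ⬝ᵥ x ≠ 0} with hU_def
  set V := {x : Fin n → ℝ | η ⬝ᵥ x ≠ 0} with hV_def
  have hcont : ∀ v : Fin n → ℝ, Continuous fun x : Fin n → ℝ => v ⬝ᵥ x := by
    intro v
    unfold dotProduct
    exact continuous_finset_sum _ fun i _ => continuous_const.mul (continuous_apply i)
  have hUopen : IsOpen U := isOpen_compl_singleton.preimage (hcont ξ)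
  have hVopen : IsOpen V := isOpen_compl_singleton.preimage (hcont η)
  have hcover : N ⊆ U ∪ V := by
    intro x hx
    by_contra h
    simp only [Set.mem_union, hU_def, hV_def, Set.mem_setOf_eq, not_or, not_not] at h
    exact hnotboth x hx h
  by_cases hNU : (N ∩ U).Nonempty
  · by_cases hNV : (N ∩ V).Nonempty
    · obtain ⟨x, hxN, hxU, hxV⟩ := hNconn U V hUopen hVopen hcover hNU hNV
      exact absurd (hQD0 x hxN) (mul_ne_zero hxU hxV)
    · refine ⟨η, hηne, fun x hx => ?_⟩
      by_contra h
      exact hNV ⟨x, hx, h⟩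
  · refine ⟨ξ, hξne, fun x hx => ?_⟩
    by_contra h
    exact hNU ⟨x, hx, h⟩
end

section
/- On ℝ^(2d), d ≥ 2, with symplectic coordinates (x₁,…,x_d, y₁,…,y_d) and Poisson bracket {f,g} = Σⱼ(∂f/∂yⱼ ∂g/∂xⱼ − ∂f/∂xⱼ ∂g/∂yⱼ), let Q_A(x,y) = x₁² − (y₁²+⋯+y_{d-1}² + x₂²+⋯+x_{d-1}²) and Q_B(x,y) = x₁x_d. Then Q_C := {Q_A, Q_B} = −2y₁x_d, the matrices A, B, C are linearly independent, A, B form a non-dissipative pair, and Q_C vanishes on the common zero set {Q_A = 0} ∩ {Q_B = 0}. -/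
open Matrix

/-- `Q_A(x,y) = x₁² − (y₁²+⋯+y_{d-1}² + x₂²+⋯+x_{d-1}²)` on `ℝ^{2d}` with `d = m+2`,
with `x i = v (Sum.inl i)` and `y j = v (Sum.inr j)` (0-indexed). -/
noncomputable def QA18 (m : ℕ) (v : Fin (m+2) ⊕ Fin (m+2) → ℝ) : ℝ :=
  (v (Sum.inl 0))^2 -
    ((∑ j : Fin (m+2), if (j : ℕ) < m + 1 then (v (Sum.inr j))^2 else 0) +
     (∑ i : Fin (m+2), if 0 < (i : ℕ) ∧ (i : ℕ) < m + 1 then (v (Sum.inl i))^2 else 0))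

/-- `Q_B(x,y) = x₁ x_d`. -/
noncomputable def QB18 (m : ℕ) (v : Fin (m+2) ⊕ Fin (m+2) → ℝ) : ℝ :=
  v (Sum.inl 0) * v (Sum.inl (Fin.last (m+1)))

/-- The standard symplectic Poisson bracket
`{f,g} = Σⱼ (∂f/∂yⱼ ∂g/∂xⱼ − ∂f/∂xⱼ ∂g/∂yⱼ)` on `ℝ^{2d}`, `d = m+2`. -/
noncomputable def poissonBracket18 (m : ℕ)
    (f g : (Fin (m+2) ⊕ Fin (m+2) → ℝ) → ℝ) (v : Fin (m+2) ⊕ Fin (m+2) → ℝ) : ℝ :=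
  ∑ j : Fin (m+2),
    ((fderiv ℝ f v (Pi.single (Sum.inr j) (1 : ℝ))) *
        (fderiv ℝ g v (Pi.single (Sum.inl j) (1 : ℝ))) -
      (fderiv ℝ f v (Pi.single (Sum.inl j) (1 : ℝ))) *
        (fderiv ℝ g v (Pi.single (Sum.inr j) (1 : ℝ))))

section Aux
open ContinuousLinearMap

noncomputable def LA (m : ℕ) (v : Fin (m+2) ⊕ Fin (m+2) → ℝ) :
    (Fin (m+2) ⊕ Fin (m+2) → ℝ) →L[ℝ] ℝ :=
  (2 * v (Sum.inl 0)) • proj (Sum.inl 0) -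
    ((∑ j : Fin (m+2), if (j : ℕ) < m + 1 then (2 * v (Sum.inr j)) • proj (Sum.inr j) else 0) +
     (∑ i : Fin (m+2), if 0 < (i : ℕ) ∧ (i : ℕ) < m + 1 then (2 * v (Sum.inl i)) • proj (Sum.inl i) else 0))

lemma sq_deriv (m : ℕ) (k : Fin (m+2) ⊕ Fin (m+2)) (v : Fin (m+2) ⊕ Fin (m+2) → ℝ) :
    HasFDerivAt (fun w : Fin (m+2) ⊕ Fin (m+2) → ℝ => (w k)^2) ((2 * v k) • (proj k : (Fin (m+2) ⊕ Fin (m+2) → ℝ) →L[ℝ] ℝ)) v := by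
  have h := (hasFDerivAt_apply (𝕜 := ℝ) k v).mul (hasFDerivAt_apply (𝕜 := ℝ) k v)
  have e : (fun w : Fin (m+2) ⊕ Fin (m+2) → ℝ => (w k)^2) = (fun f => f k) * fun f => f k := by
    funext w; simp only [Pi.mul_apply]; ring
  rw [e, two_mul, add_smul]; exact h

lemma hasFDerivAt_QA (m : ℕ) (v : Fin (m+2) ⊕ Fin (m+2) → ℝ) :
    HasFDerivAt (QA18 m) (LA m v) v := by
  unfold QA18 LA
  apply HasFDerivAt.sub (sq_deriv m _ v)
  apply HasFDerivAt.add <;>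
  · apply HasFDerivAt.fun_sum
    intro i _
    split
    · exact sq_deriv m _ v
    · exact hasFDerivAt_const 0 v

noncomputable def LB (m : ℕ) (v : Fin (m+2) ⊕ Fin (m+2) → ℝ) :
    (Fin (m+2) ⊕ Fin (m+2) → ℝ) →L[ℝ] ℝ :=
  v (Sum.inl 0) • proj (Sum.inl (Fin.last (m+1))) + v (Sum.inl (Fin.last (m+1))) • proj (Sum.inl 0)

lemma hasFDerivAt_QB (m : ℕ) (v : Fin (m+2) ⊕ Fin (m+2) → ℝ) :
    HasFDerivAt (QB18 m) (LB m v) v :=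
  (hasFDerivAt_apply (𝕜 := ℝ) _ v).mul (hasFDerivAt_apply (𝕜 := ℝ) _ v)

lemma ite_CLM_apply (m : ℕ) {c : Prop} [Decidable c]
    (L : (Fin (m+2) ⊕ Fin (m+2) → ℝ) →L[ℝ] ℝ) (w : Fin (m+2) ⊕ Fin (m+2) → ℝ) :
    (if c then L else 0) w = if c then L w else 0 := by
  split <;> simp

lemma LA_inr (m : ℕ) (v : Fin (m+2) ⊕ Fin (m+2) → ℝ) (j : Fin (m+2)) :
    LA m v (Pi.single (Sum.inr j) 1) = -(if (j : ℕ) < m + 1 then 2 * v (Sum.inr j) else 0) := by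
  simp [LA, ContinuousLinearMap.sub_apply, ContinuousLinearMap.add_apply,
    ContinuousLinearMap.smul_apply, ContinuousLinearMap.sum_apply, proj_apply,
    Pi.single_apply, smul_eq_mul, ite_CLM_apply, Finset.sum_ite_eq, mul_ite, mul_one, mul_zero]
  have h : ∀ x : Fin (m+2), (if (x:ℕ) < m+1 then if x = j then 2 * v (Sum.inr x) else 0 else 0)
      = if x = j then (if (x:ℕ) < m+1 then 2 * v (Sum.inr x) else 0) else 0 := by
    intro x; split_ifs <;> rfl
  simp only [← Nat.lt_add_one_iff, h, Finset.sum_ite_eq', Finset.mem_univ, if_true]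

lemma LB_inr (m : ℕ) (v : Fin (m+2) ⊕ Fin (m+2) → ℝ) (j : Fin (m+2)) :
    LB m v (Pi.single (Sum.inr j) 1) = 0 := by
  simp [LB, Pi.single_apply]

lemma LB_inl (m : ℕ) (v : Fin (m+2) ⊕ Fin (m+2) → ℝ) (j : Fin (m+2)) :
    LB m v (Pi.single (Sum.inl j) 1) =
      (if Fin.last (m+1) = j then v (Sum.inl 0) else 0) +
      (if (0 : Fin (m+2)) = j then v (Sum.inl (Fin.last (m+1))) else 0) := by
  simp [LB, Pi.single_apply]

lemma bracket_eval (m : ℕ) (v : Fin (m+2) ⊕ Fin (m+2) → ℝ) :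
    poissonBracket18 m (QA18 m) (QB18 m) v =
      -2 * v (Sum.inr 0) * v (Sum.inl (Fin.last (m+1))) := by
  unfold poissonBracket18
  rw [(hasFDerivAt_QA m v).fderiv, (hasFDerivAt_QB m v).fderiv]
  simp only [LA_inr, LB_inr, LB_inl, mul_zero, sub_zero, mul_add, mul_ite, mul_one,
    neg_mul, Finset.sum_add_distrib, Finset.sum_ite_eq, Finset.mem_univ, if_true,
    Fin.val_last, Fin.val_zero, lt_irrefl, if_false, ite_mul, zero_mul, neg_zero,
    Nat.zero_lt_succ, if_true, zero_add]


noncomputable def W18 (m : ℕ) (a b c : ℝ) : Fin (m+2) ⊕ Fin (m+2) → ℝ :=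
  fun k => if k = Sum.inl 0 then a else if k = Sum.inr 0 then b
    else if k = Sum.inl (Fin.last (m+1)) then c else 0

lemma last_ne_zero (m : ℕ) : (Fin.last (m+1)) ≠ (0 : Fin (m+2)) := by
  simp [Fin.ext_iff]

lemma W_inl0 (m : ℕ) (a b c : ℝ) : W18 m a b c (Sum.inl 0) = a := by simp [W18]
lemma W_inr0 (m : ℕ) (a b c : ℝ) : W18 m a b c (Sum.inr 0) = b := by simp [W18]
lemma W_last (m : ℕ) (a b c : ℝ) : W18 m a b c (Sum.inl (Fin.last (m+1))) = c := by
  simp [W18, last_ne_zero m]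

lemma QA_W (m : ℕ) (a b c : ℝ) : QA18 m (W18 m a b c) = a^2 - b^2 := by
  have hS1 : (∑ j : Fin (m+2), if (j:ℕ) < m+1 then (W18 m a b c (Sum.inr j))^2 else 0)
      = b^2 := by
    rw [Finset.sum_eq_single 0]
    · simp [W18]
    · intro i _ hi; simp [W18, hi]
    · simp
  have hS2 : (∑ i : Fin (m+2), if 0 < (i:ℕ) ∧ (i:ℕ) < m+1 then (W18 m a b c (Sum.inl i))^2 else 0)
      = 0 := by
    apply Finset.sum_eq_zero
    intro i _
    by_cases h : 0 < (i:ℕ) ∧ (i:ℕ) < m+1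
    · have h0 : i ≠ 0 := by rintro rfl; simp at h
      have hl : i ≠ Fin.last (m+1) := by rintro rfl; simp at h
      simp [W18, h, h0, hl]
    · rw [if_neg h]
  unfold QA18
  rw [hS1, hS2, W_inl0]
  ring

lemma QB_W (m : ℕ) (a b c : ℝ) : QB18 m (W18 m a b c) = a * c := by
  unfold QB18
  rw [W_inl0, W_last]

end Aux

theorem isotropic_radical_counterexample (m : ℕ)
    (A B C : Matrix (Fin (m+2) ⊕ Fin (m+2)) (Fin (m+2) ⊕ Fin (m+2)) ℝ)
    (hAs : A.IsSymm) (hBs : B.IsSymm) (hCs : C.IsSymm)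
    (hA : ∀ v : Fin (m+2) ⊕ Fin (m+2) → ℝ, v ⬝ᵥ A.mulVec v = QA18 m v)
    (hB : ∀ v : Fin (m+2) ⊕ Fin (m+2) → ℝ, v ⬝ᵥ B.mulVec v = QB18 m v)
    (hC : ∀ v : Fin (m+2) ⊕ Fin (m+2) → ℝ,
      v ⬝ᵥ C.mulVec v = poissonBracket18 m (QA18 m) (QB18 m) v) :
    (∀ v : Fin (m+2) ⊕ Fin (m+2) → ℝ,
      v ⬝ᵥ C.mulVec v = -2 * v (Sum.inr 0) * v (Sum.inl (Fin.last (m+1)))) ∧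
    LinearIndependent ℝ ![A, B, C] ∧
    (∀ F ∈ Submodule.span ℝ
        ({A, B} : Set (Matrix (Fin (m+2) ⊕ Fin (m+2)) (Fin (m+2) ⊕ Fin (m+2)) ℝ)),
      F.PosSemidef → F = 0) ∧
    (∀ v : Fin (m+2) ⊕ Fin (m+2) → ℝ, QA18 m v = 0 → QB18 m v = 0 →
      v ⬝ᵥ C.mulVec v = 0) := by
  have hCval : ∀ v : Fin (m+2) ⊕ Fin (m+2) → ℝ,
      v ⬝ᵥ C.mulVec v = -2 * v (Sum.inr 0) * v (Sum.inl (Fin.last (m+1))) :=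
    fun v => (hC v).trans (bracket_eval m v)
  have hcomb : ∀ (a b c : ℝ) (v : Fin (m+2) ⊕ Fin (m+2) → ℝ),
      v ⬝ᵥ (a • A + b • B + c • C).mulVec v =
        a * QA18 m v + b * QB18 m v +
          c * (-2 * v (Sum.inr 0) * v (Sum.inl (Fin.last (m+1)))) := by
    intro a b c v
    simp [Matrix.add_mulVec, Matrix.smul_mulVec, dotProduct_add, dotProduct_smul,
      smul_eq_mul, hA v, hB v, hCval v]
  refine ⟨hCval, ?_, ?_, ?_⟩
  · rw [Fintype.linearIndependent_iff]
    intro g hg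
    rw [Fin.sum_univ_three] at hg
    simp only [Matrix.cons_val_zero, Matrix.cons_val_one, Matrix.head_cons,
      Matrix.cons_val_two, Matrix.tail_cons] at hg
    have key : ∀ (a b c : ℝ), (g 0) * (QA18 m (W18 m a b c)) + (g 1) * (QB18 m (W18 m a b c))
        + (g 2) * (-2 * (W18 m a b c (Sum.inr 0)) * (W18 m a b c (Sum.inl (Fin.last (m+1))))) = 0 := by
      intro a b c
      rw [← hcomb, hg]
      simp
    have e1 := key 1 0 0
    have e3 := key 1 0 1
    have e4 := key 0 1 1
    rw [QA_W, QB_W, W_inr0, W_last] at e1 e3 e4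
    have h0 : g 0 = 0 := by linarith [e1]
    have h1 : g 1 = 0 := by nlinarith [e3]
    have h2 : g 2 = 0 := by nlinarith [e4]
    intro i
    fin_cases i <;> assumption
  · intro F hF hpsd
    rw [Submodule.mem_span_pair] at hF
    obtain ⟨a, b, rfl⟩ := hF
    have hq : ∀ v : Fin (m+2) ⊕ Fin (m+2) → ℝ,
        v ⬝ᵥ (a • A + b • B).mulVec v = a * QA18 m v + b * QB18 m v := by
      intro v
      have := hcomb a b 0 v
      simpa using this
    have hpos := fun x => hpsd.dotProduct_mulVec_nonneg x
    have ha1 := hpos (W18 m 1 0 0)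
    have ha2 := hpos (W18 m 0 1 0)
    have hb1 := hpos (W18 m 1 0 1)
    have hb2 := hpos (W18 m 1 0 (-1))
    simp only [star_trivial, hq, QA_W, QB_W] at ha1 ha2 hb1 hb2
    have ha : a = 0 := by nlinarith
    have hb : b = 0 := by nlinarith
    rw [ha, hb]
    simp
  · intro v hQA hQB
    rw [hCval v]
    unfold QB18 at hQB
    rcases mul_eq_zero.mp hQB with h0 | hl
    · have hy : v (Sum.inr 0) = 0 := by
        unfold QA18 at hQA
        rw [h0] at hQA
        have hS1nn : ∀ j : Fin (m+2), j ∈ Finset.univ →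
            0 ≤ (if (j:ℕ) < m+1 then (v (Sum.inr j))^2 else 0) := by
          intro j _; positivity
        have hS2nn : (0:ℝ) ≤ ∑ i : Fin (m+2),
            if 0 < (i:ℕ) ∧ (i:ℕ) < m+1 then (v (Sum.inl i))^2 else 0 := by
          apply Finset.sum_nonneg; intro i _; positivity
        have hS1 : (∑ j : Fin (m+2), if (j:ℕ) < m+1 then (v (Sum.inr j))^2 else 0) = 0 := by
          have h1 : (0:ℝ) ≤ ∑ j : Fin (m+2), if (j:ℕ) < m+1 then (v (Sum.inr j))^2 else 0 :=
            Finset.sum_nonneg hS1nn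
          nlinarith [hQA]
        have := (Finset.sum_eq_zero_iff_of_nonneg hS1nn).mp hS1 0 (Finset.mem_univ 0)
        simp at this
        exact this
      rw [hy]; ring
    · rw [hl]; ring
end
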